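/- Let G be a graph containing neither C₄, C₆, nor C₇ as subgraphs, let x be a vertex, and let y₁, y₂ be distinct neighbors of x. Then there are no edges between N_2(y₁) ∩ N_3(x) and N_2(y₂) ∩ N_3(x). -/

import Mathlib

open SimpleGraph Set

variable {V : Type*} [Fintype V] [DecidableEq V]

/-- `N_i(S)`: vertices whose minimum distance to the set `S` equals `i`. -/
def NSet (G : SimpleGraph V) (i : ℕ) (S : Set V) : Set V :=
  {u | (⨅ s ∈ S, G.edist s u) = (i : ℕ∞)}

/-- `N_i(x)`: vertices at distance exactly `i` from `x`. -/
def Nv (G : SimpleGraph V) (i : ℕ) (x : V) : Set V := {u | G.edist x u = (i : ℕ∞)}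

/-- `S` is an independent set of `G`. -/
def IsIndep (G : SimpleGraph V) (S : Set V) : Prop :=
  S.Pairwise fun u v => ¬ G.Adj u v

/-- `A` dominates `T`. -/
def Dominates (G : SimpleGraph V) (A T : Set V) : Prop :=
  T ⊆ A ∪ {u | ∃ a ∈ A, G.Adj a u}

/-- `S` is a maximal independent set of `G`. -/
def IsMaxIndep (G : SimpleGraph V) (S : Set V) : Prop :=
  IsIndep G S ∧ ∀ T, IsIndep G T → S ⊆ T → T = S

/-- The induced subgraph on `X ∪ Y` is complete bipartite with parts `X`, `Y`. -/
def IsCompBipartite (G : SimpleGraph V) (X Y : Set V) : Prop :=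
  X.Nonempty ∧ Y.Nonempty ∧ Disjoint X Y ∧ IsIndep G X ∧ IsIndep G Y ∧
    ∀ x ∈ X, ∀ y ∈ Y, G.Adj x y

/-- `B = (X, Y)` is a generating subgraph of `G`. -/
def Generating (G : SimpleGraph V) (X Y : Set V) : Prop :=
  IsCompBipartite G X Y ∧ ∃ S : Set V, IsIndep G S ∧ Disjoint S (X ∪ Y) ∧
    IsMaxIndep G (S ∪ X) ∧ IsMaxIndep G (S ∪ Y)

/-- `G` contains a (not necessarily induced) cycle on `k` vertices. -/
def HasCycle (G : SimpleGraph V) (k : ℕ) : Prop :=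
  ∃ f : ZMod k → V, Function.Injective f ∧ ∀ i, G.Adj (f i) (f (i + 1))

/-- Weight of a set of vertices. -/
noncomputable def wt (w : V → ℝ) (S : Set V) : ℝ := ∑ x ∈ S.toFinite.toFinset, w x

/-- `G` is `w`-well-covered. -/
def WWellCovered (G : SimpleGraph V) (w : V → ℝ) : Prop :=
  ∀ S T : Set V, IsMaxIndep G S → IsMaxIndep G T → wt w S = wt w T


private lemma mid_of_edist_two {V : Type*} {G : SimpleGraph V} {u v : V}
    (h : G.edist u v = 2) : ∃ p, G.Adj u p ∧ G.Adj p v := by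
  obtain ⟨w, hw⟩ := G.exists_walk_of_edist_eq_coe h
  match w, hw with
  | .cons h1 (.cons h2 .nil), _ => exact ⟨_, h1, h2⟩

private lemma adj_edist_le' {V : Type*} {G : SimpleGraph V} {u v : V} (h : G.Adj u v) :
    G.edist u v ≤ 1 := le_of_eq (SimpleGraph.edist_eq_one_iff_adj.mpr h)

theorem no_edges_between_of_noC4C6C7 (G : SimpleGraph V) (h4 : ¬ HasCycle G 4)
    (h6 : ¬ HasCycle G 6) (h7 : ¬ HasCycle G 7) (x y₁ y₂ : V)
    (h1 : G.Adj x y₁) (h2 : G.Adj x y₂) (hne : y₁ ≠ y₂) :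
    ∀ a ∈ Nv G 2 y₁ ∩ Nv G 3 x, ∀ b ∈ Nv G 2 y₂ ∩ Nv G 3 x, ¬ G.Adj a b := by
  rintro a ⟨ha1, ha2⟩ b ⟨hb1, hb2⟩ hab
  simp only [Nv, Set.mem_setOf_eq] at ha1 ha2 hb1 hb2
  have hxa : G.edist x a = 3 := by exact_mod_cast ha2
  have hxb : G.edist x b = 3 := by exact_mod_cast hb2
  obtain ⟨p, hy1p, hpa⟩ := mid_of_edist_two (by exact_mod_cast ha1)
  obtain ⟨q, hy2q, hqb⟩ := mid_of_edist_two (by exact_mod_cast hb1)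
  have hxp : G.edist x p ≤ 2 := by
    calc G.edist x p ≤ G.edist x y₁ + G.edist y₁ p := G.edist_triangle
    _ ≤ 1 + 1 := add_le_add (adj_edist_le' h1) (adj_edist_le' hy1p)
    _ = 2 := by norm_num
  have hxq : G.edist x q ≤ 2 := by
    calc G.edist x q ≤ G.edist x y₂ + G.edist y₂ q := G.edist_triangle
    _ ≤ 1 + 1 := add_le_add (adj_edist_le' h2) (adj_edist_le' hy2q)
    _ = 2 := by norm_num
  have h32 : ¬ ((3:ℕ∞) ≤ 2) := by norm_num
  have h31 : ¬ ((3:ℕ∞) ≤ 1) := by norm_num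
  have nax : a ≠ x := fun h => by rw [h, G.edist_self] at hxa; norm_num at hxa
  have nbx : b ≠ x := fun h => by rw [h, G.edist_self] at hxb; norm_num at hxb
  have nay1 : a ≠ y₁ := fun h => by rw [h] at hxa; exact h31 (hxa ▸ adj_edist_le' h1)
  have nay2 : a ≠ y₂ := fun h => by rw [h] at hxa; exact h31 (hxa ▸ adj_edist_le' h2)
  have nby1 : b ≠ y₁ := fun h => by rw [h] at hxb; exact h31 (hxb ▸ adj_edist_le' h1)
  have nby2 : b ≠ y₂ := fun h => by rw [h] at hxb; exact h31 (hxb ▸ adj_edist_le' h2)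
  have nap : a ≠ p := fun h => by exact h32 (by rw [← h] at hxp; rw [hxa] at hxp; exact hxp)
  have nbq : b ≠ q := fun h => by exact h32 (by rw [← h] at hxq; rw [hxb] at hxq; exact hxq)
  have naq : a ≠ q := fun h => by exact h32 (by rw [← h] at hxq; rw [hxa] at hxq; exact hxq)
  have nbp : b ≠ p := fun h => by exact h32 (by rw [← h] at hxp; rw [hxb] at hxp; exact hxp)
  have npx : p ≠ x := fun h => by subst h; exact h31 (hxa ▸ adj_edist_le' hpa)
  have nqx : q ≠ x := fun h => by subst h; exact h31 (hxb ▸ adj_edist_le' hqb)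
  have npy2 : p ≠ y₂ := fun h => by
    subst h
    have hle : G.edist x a ≤ 2 := by
      calc G.edist x a ≤ G.edist x p + G.edist p a := G.edist_triangle
      _ ≤ 1 + 1 := add_le_add (adj_edist_le' h2) (adj_edist_le' hpa)
      _ = 2 := by norm_num
    exact h32 (hxa ▸ hle)
  have nqy1 : q ≠ y₁ := fun h => by
    subst h
    have hle : G.edist x b ≤ 2 := by
      calc G.edist x b ≤ G.edist x q + G.edist q b := G.edist_triangle
      _ ≤ 1 + 1 := add_le_add (adj_edist_le' h1) (adj_edist_le' hqb)
      _ = 2 := by norm_num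
    exact h32 (hxb ▸ hle)
  have nab : a ≠ b := hab.ne
  have npy1 : p ≠ y₁ := hy1p.ne'
  have nqy2 : q ≠ y₂ := hy2q.ne'
  have nxy1 : x ≠ y₁ := h1.ne
  have nxy2 : x ≠ y₂ := h2.ne
  by_cases hpq : p = q
  · -- 4-cycle x, y₁, p, y₂
    subst hpq
    refine h4 ⟨![x, y₁, p, y₂], ?_, ?_⟩
    · intro i j hij
      fin_cases i <;> fin_cases j <;> simp_all <;> rfl
    · intro i
      fin_cases i
      · exact h1
      · exact hy1p
      · exact hy2q.symm
      · exact h2.symm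
  · -- 7-cycle x, y₁, p, a, b, q, y₂
    refine h7 ⟨![x, y₁, p, a, b, q, y₂], ?_, ?_⟩
    · intro i j hij
      fin_cases i <;> fin_cases j <;>
        first
        | rfl
        | exact absurd hij (by
            first
            | exact nxy1 | exact nxy1.symm | exact nxy2 | exact nxy2.symm
            | exact npx | exact npx.symm | exact nax | exact nax.symm
            | exact nbx | exact nbx.symm | exact nqx | exact nqx.symm
            | exact npy1 | exact npy1.symm | exact nay1 | exact nay1.symm
            | exact nby1 | exact nby1.symm | exact nqy1 | exact nqy1.symm
            | exact hne | exact hne.symm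
            | exact nap | exact nap.symm | exact nbp | exact nbp.symm
            | exact hpq | exact (Ne.symm hpq) | exact npy2 | exact npy2.symm
            | exact nab | exact nab.symm | exact naq | exact naq.symm
            | exact nay2 | exact nay2.symm
            | exact nbq | exact nbq.symm | exact nby2 | exact nby2.symm
            | exact nqy2 | exact nqy2.symm)
    · intro i
      fin_cases i
      · exact h1
      · exact hy1p
      · exact hpa
      · exact hab
      · exact hqb.symm
      · exact hy2q.symm
      · exact h2.symm
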